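/- Let X_i and X_j be independent with X_i = x_i + σ·ε_i, X_j = x_j + σ·ε_j, x_i > x_j, where ε_i, ε_j are i.i.d. standard Laplace random variables. If a ≤ x_j, then Pr[X_i > X_j | X_i < a, X_j < a] = 1/2. -/

import Mathlib

open MeasureTheory ENNReal Set

/-- Density of `x₀ + σ·ε` where `ε` is standard Laplace. -/
noncomputable def laplaceShiftDensity (x₀ σ : ℝ) (t : ℝ) : ℝ≥0∞ :=
  ENNReal.ofReal ((1 / (2 * σ)) * Real.exp (-|t - x₀| / σ))

lemma aux_smul_prod {μ ν : Measure ℝ} [SFinite μ] [SFinite ν] (c : ℝ≥0∞) :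
    (c • μ).prod ν = c • (μ.prod ν) := by
  ext s hs
  rw [Measure.prod_apply hs, Measure.smul_apply, Measure.prod_apply hs,
    lintegral_smul_measure, smul_eq_mul]

lemma aux_prod_smul {μ ν : Measure ℝ} [SFinite μ] [SFinite ν] (c : ℝ≥0∞) :
    μ.prod (c • ν) = c • (μ.prod ν) := by
  ext s hs
  rw [Measure.prod_apply hs, Measure.smul_apply, smul_eq_mul, Measure.prod_apply hs,
    ← lintegral_const_mul _ (measurable_measure_prodMk_left hs)]
  simp [Measure.smul_apply]

theorem stmt_17 (xi xj σ a : ℝ) (hσ : 0 < σ) (hij : xi > xj) (ha : a ≤ xj) :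
    (((volume.withDensity (laplaceShiftDensity xi σ)).prod
        (volume.withDensity (laplaceShiftDensity xj σ)))
          {p : ℝ × ℝ | p.1 > p.2 ∧ p.1 < a ∧ p.2 < a}) /
      (((volume.withDensity (laplaceShiftDensity xi σ)).prod
        (volume.withDensity (laplaceShiftDensity xj σ)))
          {p : ℝ × ℝ | p.1 < a ∧ p.2 < a}) = 1 / 2 := by
  set g : ℝ → ℝ≥0∞ := fun t => ENNReal.ofReal (Real.exp (t / σ)) with hg
  have hgm : Measurable g :=
    (Real.measurable_exp.comp (measurable_id.div_const σ)).ennreal_ofReal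
  set νr : Measure ℝ := (volume.restrict (Iio a)).withDensity g with hνr
  set κ : Measure (ℝ × ℝ) := νr.prod νr with hκ
  -- key: restriction of shifted laplace density measure
  have key : ∀ x₀ : ℝ, a ≤ x₀ →
      (volume.withDensity (laplaceShiftDensity x₀ σ)).restrict (Iio a)
        = ENNReal.ofReal (1 / (2 * σ) * Real.exp (-x₀ / σ)) • νr := by
    intro x₀ h₀
    rw [hνr, restrict_withDensity measurableSet_Iio, ← withDensity_smul _ hgm]
    refine withDensity_congr_ae ?_
    filter_upwards [ae_restrict_mem measurableSet_Iio] with t ht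
    have h1 : |t - x₀| = x₀ - t := by
      rw [abs_of_nonpos (by simp only [mem_Iio] at ht; linarith), neg_sub]
    simp only [laplaceShiftDensity, Pi.smul_apply, hg, smul_eq_mul]
    rw [← ENNReal.ofReal_mul (by positivity)]
    congr 1
    rw [h1, mul_assoc, ← Real.exp_add]
    congr 2
    ring
  have haxi : a ≤ xi := ha.trans hij.le
  set ci : ℝ≥0∞ := ENNReal.ofReal (1 / (2 * σ) * Real.exp (-xi / σ)) with hci
  set cj : ℝ≥0∞ := ENNReal.ofReal (1 / (2 * σ) * Real.exp (-xj / σ)) with hcj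
  set Q : Set (ℝ × ℝ) := Iio a ×ˢ Iio a with hQ
  set μP : Measure (ℝ × ℝ) := (volume.withDensity (laplaceShiftDensity xi σ)).prod
      (volume.withDensity (laplaceShiftDensity xj σ)) with hμP
  have hprodQ : μP.restrict Q = (ci * cj) • κ := by
    rw [hμP, hQ, ← Measure.prod_restrict, key xi haxi, key xj ha, ← hci, ← hcj,
      aux_smul_prod, aux_prod_smul, smul_smul, hκ]
  -- set rewriting
  have hGm : MeasurableSet {p : ℝ × ℝ | p.2 < p.1} :=
    measurableSet_lt measurable_snd measurable_fst
  have hLm : MeasurableSet {p : ℝ × ℝ | p.1 < p.2} :=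
    measurableSet_lt measurable_fst measurable_snd
  have hset1 : {p : ℝ × ℝ | p.1 > p.2 ∧ p.1 < a ∧ p.2 < a} = {p : ℝ × ℝ | p.2 < p.1} ∩ Q := by
    ext p; simp [hQ, Set.mem_prod, and_comm]
  have hset2 : {p : ℝ × ℝ | p.1 < a ∧ p.2 < a} = Q := by
    ext p; simp [hQ, Set.mem_prod]
  have hNum : μP {p : ℝ × ℝ | p.1 > p.2 ∧ p.1 < a ∧ p.2 < a}
      = (ci * cj) * κ {p : ℝ × ℝ | p.2 < p.1} := by
    rw [hset1, ← Measure.restrict_apply hGm, hprodQ, Measure.smul_apply, smul_eq_mul]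
  have hDen : μP {p : ℝ × ℝ | p.1 < a ∧ p.2 < a} = (ci * cj) * κ univ := by
    rw [hset2, ← Measure.restrict_apply_univ Q, hprodQ, Measure.smul_apply, smul_eq_mul]
  -- symmetry
  have hswap : κ {p : ℝ × ℝ | p.2 < p.1} = κ {p : ℝ × ℝ | p.1 < p.2} := by
    have h1 : Prod.swap ⁻¹' {p : ℝ × ℝ | p.1 < p.2} = {p : ℝ × ℝ | p.2 < p.1} := by
      ext p; simp
    calc κ {p : ℝ × ℝ | p.2 < p.1} = κ (Prod.swap ⁻¹' {p : ℝ × ℝ | p.1 < p.2}) := by rw [h1]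
      _ = (κ.map Prod.swap) {p : ℝ × ℝ | p.1 < p.2} :=
          (Measure.map_apply measurable_swap hLm).symm
      _ = κ {p : ℝ × ℝ | p.1 < p.2} := by rw [hκ, Measure.prod_swap]
  -- diagonal null
  have hDm : MeasurableSet {p : ℝ × ℝ | p.1 = p.2} :=
    measurableSet_eq_fun measurable_fst measurable_snd
  have hdiag : κ {p : ℝ × ℝ | p.1 = p.2} = 0 := by
    rw [hκ, Measure.prod_apply hDm]
    have h1 : ∀ x : ℝ, (Prod.mk x ⁻¹' {p : ℝ × ℝ | p.1 = p.2}) = {x} := by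
      intro x; ext y; simp [eq_comm]
    have h2 : ∀ x : ℝ, νr {x} = 0 := by
      intro x
      refine withDensity_absolutelyContinuous _ _ ?_
      exact measure_mono_null (subset_refl _) (le_antisymm
        ((Measure.restrict_apply_le _ _).trans_eq (Real.volume_singleton)) zero_le')
    simp [h1, h2]
  -- univ split
  have huniv : κ univ = 2 * κ {p : ℝ × ℝ | p.2 < p.1} := by
    have hU : (univ : Set (ℝ × ℝ))
        = {p : ℝ × ℝ | p.1 = p.2} ∪ ({p : ℝ × ℝ | p.1 < p.2} ∪ {p : ℝ × ℝ | p.2 < p.1}) := by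
      ext p
      simp only [mem_univ, mem_union, mem_setOf_eq, true_iff]
      rcases lt_trichotomy p.1 p.2 with h | h | h <;> tauto
    have hd1 : Disjoint {p : ℝ × ℝ | p.1 = p.2} ({p : ℝ × ℝ | p.1 < p.2} ∪ {p : ℝ × ℝ | p.2 < p.1}) := by
      rw [Set.disjoint_left]
      rintro p hp (hq | hq) <;> simp only [mem_setOf_eq] at hp hq
      · exact absurd hp hq.ne
      · exact absurd hp hq.ne'
    have hd2 : Disjoint {p : ℝ × ℝ | p.1 < p.2} {p : ℝ × ℝ | p.2 < p.1} := by
      rw [Set.disjoint_left]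
      intro p hp hq
      simp only [mem_setOf_eq] at hp hq
      exact absurd hq (asymm hp)
    rw [hU, measure_union hd1 (hLm.union hGm), hdiag, zero_add,
      measure_union hd2 hGm, hswap, two_mul]
  -- finiteness
  have hint : Integrable (fun t : ℝ => Real.exp (t / σ)) (volume.restrict (Iio a)) := by
    have h2 : Integrable ((Iic (a / σ)).indicator Real.exp) :=
      (integrable_indicator_iff measurableSet_Iic).2 (integrableOn_exp_Iic _)
    have h3 := (integrable_comp_div_iff ((Iic (a / σ)).indicator Real.exp) hσ.ne').2 h2
    have h4 : (fun x : ℝ => (Iic (a / σ)).indicator Real.exp (x / σ))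
        = (Iic a).indicator (fun t => Real.exp (t / σ)) := by
      funext x
      by_cases hx : x ≤ a
      · rw [indicator_of_mem (mem_Iic.2 ((div_le_div_iff_of_pos_right hσ).2 hx)),
          indicator_of_mem (mem_Iic.2 hx)]
      · rw [indicator_of_notMem (by simpa [mem_Iic, div_le_div_iff_of_pos_right hσ] using hx),
          indicator_of_notMem (by simpa [mem_Iic] using hx)]
    rw [h4] at h3
    exact ((integrable_indicator_iff measurableSet_Iic).1 h3).mono_set Iio_subset_Iic_self
  have hνrfin : νr univ < ∞ := by
    rw [hνr, withDensity_apply _ MeasurableSet.univ, Measure.restrict_univ]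
    have h := hint.hasFiniteIntegral
    rw [hasFiniteIntegral_iff_ofReal (ae_of_all _ fun t => (Real.exp_pos _).le)] at h
    exact h
  have hκfin : κ {p : ℝ × ℝ | p.2 < p.1} < ∞ := by
    refine lt_of_le_of_lt (measure_mono (subset_univ _)) ?_
    rw [hκ, ← univ_prod_univ, Measure.prod_prod]
    exact ENNReal.mul_lt_top hνrfin hνrfin
  -- positivity
  have hpos : ∀ b c : ℝ, b < c → c ≤ a → 0 < νr (Ioo b c) := by
    intro b c hbc hca
    have hsub : Ioo b c ⊆ Iio a := fun x hx => lt_of_lt_of_le hx.2 hca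
    rw [hνr, withDensity_apply _ measurableSet_Ioo, Measure.restrict_restrict measurableSet_Ioo,
      inter_eq_self_of_subset_left hsub]
    calc (0 : ℝ≥0∞) < ENNReal.ofReal (Real.exp (b / σ)) * volume (Ioo b c) := by
          rw [Real.volume_Ioo]
          exact ENNReal.mul_pos (by simp [Real.exp_pos]) (by simp [hbc])
      _ = ∫⁻ _ in Ioo b c, ENNReal.ofReal (Real.exp (b / σ)) := (setLIntegral_const _ _).symm
      _ ≤ ∫⁻ t in Ioo b c, g t := by
          refine setLIntegral_mono hgm fun x hx => ?_
          refine ENNReal.ofReal_le_ofReal (Real.exp_le_exp.2 ?_)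
          gcongr
          exact hx.1.le
  have hκpos : 0 < κ {p : ℝ × ℝ | p.2 < p.1} := by
    refine lt_of_lt_of_le ?_ (measure_mono (s := Ioo (a - 1) a ×ˢ Ioo (a - 2) (a - 1)) ?_)
    · rw [hκ, Measure.prod_prod]
      exact ENNReal.mul_pos (hpos _ _ (by linarith) le_rfl).ne'
        (hpos _ _ (by linarith) (by linarith)).ne'
    · rintro ⟨x, y⟩ ⟨hx, hy⟩
      simp only [mem_setOf_eq]
      exact lt_trans hy.2 hx.1
  -- final arithmetic
  have hci0 : ci ≠ 0 := by
    rw [hci]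
    simp only [ne_eq, ENNReal.ofReal_eq_zero, not_le]
    positivity
  have hcj0 : cj ≠ 0 := by
    rw [hcj]
    simp only [ne_eq, ENNReal.ofReal_eq_zero, not_le]
    positivity
  set M : ℝ≥0∞ := (ci * cj) * κ {p : ℝ × ℝ | p.2 < p.1} with hM
  have hM0 : M ≠ 0 := by
    rw [hM]
    exact mul_ne_zero (mul_ne_zero hci0 hcj0) hκpos.ne'
  have hMt : M ≠ ∞ := by
    rw [hM]
    exact ENNReal.mul_ne_top (ENNReal.mul_ne_top ENNReal.ofReal_ne_top ENNReal.ofReal_ne_top)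
      hκfin.ne
  rw [hNum, hDen, huniv]
  have h2 : ci * cj * (2 * κ {p : ℝ × ℝ | p.2 < p.1}) = 2 * M := by rw [hM]; ring
  rw [h2, div_eq_mul_inv, ENNReal.mul_inv (Or.inl two_ne_zero) (Or.inl ENNReal.ofNat_ne_top),
    mul_left_comm, ENNReal.mul_inv_cancel hM0 hMt, mul_one, one_div]
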